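/- (1) For every z ∈ [0,∞)^d, the recursive max-linear values x on 𝒟 satisfy x_i = max( max_{k ∈ pa^B(i)} (b_{ki}/b_{kk}) x_k , b_{ii} z_i ) for every i ∈ V, where pa^B(i) denotes the parents of i in 𝒟^B; thus the model is a recursive max-linear model on 𝒟^B with the uniquely determined weights c_{ki} = b_{ki}/b_{kk} (k ∈ pa^B(i)) and c_{ii} = b_{ii}. (2) If 𝒟' = (V,E') is any DAG with positive weights c'_{ki} ((k,i) ∈ E') and c'_{ii} (i ∈ V) such that for every z ∈ [0,∞)^d the recursive max-linear values x' on 𝒟' satisfy x'_i = max_{j∈V} b_{ji} z_j for all i, then E^B ⊆ E', c'_{ii} = b_{ii} for all i, and c'_{ki} = b_{ki}/b_{kk} for all (k,i) ∈ E^B; hence 𝒟^B is the DAG with the minimum number of edges representing the model. -/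

import Mathlib

open scoped NNReal ENNReal Classical

namespace MaxLinearDAG

variable {d : ℕ}

/-- `p` is a directed path (with at least one edge) from `j` to `i` in the edge relation `E`. -/
def PathFrom (E : Fin d → Fin d → Prop) (j i : Fin d) (p : List (Fin d)) : Prop :=
  2 ≤ p.length ∧ p.head? = some j ∧ p.getLast? = some i ∧ List.Chain' E p

/-- The directed graph given by `E` is acyclic: no directed path from a node to itself. -/
def Acyclic (E : Fin d → Fin d → Prop) : Prop :=
  ∀ i, ¬ ∃ p, PathFrom E i i p

/-- `j` is an ancestor of `i`: there is a path from `j` to `i`. -/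
def anc (E : Fin d → Fin d → Prop) (j i : Fin d) : Prop :=
  ∃ p, PathFrom E j i p

/-- The weight of a path `p` starting at `j`: `c j j` times the product of the
edge weights along `p`. -/
noncomputable def pathWeight (c : Fin d → Fin d → ℝ≥0) (j : Fin d) (p : List (Fin d)) : ℝ≥0 :=
  c j j * ((p.zip p.tail).map fun q => c q.1 q.2).prod

/-- `b` is the max-linear coefficient matrix of the recursive ML model on `(E, c)`:
for `j ∈ an(i)`, `b j i` is the (attained) maximum of the path weights over all paths
from `j` to `i`; `b i i = c i i`; and `b j i = 0` for `j ∉ An(i)`. -/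
def IsMLMatrix (E : Fin d → Fin d → Prop) (c b : Fin d → Fin d → ℝ≥0) : Prop :=
  (∀ i, b i i = c i i) ∧
  (∀ j i, j ≠ i → ¬ anc E j i → b j i = 0) ∧
  (∀ j i p, PathFrom E j i p → pathWeight c j p ≤ b j i) ∧
  (∀ j i, anc E j i → ∃ p, PathFrom E j i p ∧ pathWeight c j p = b j i)

/-- `x` is the vector of recursive max-linear values on `(E, c)` for noise `z`:
`x i = max (max_{k ∈ pa(i)} c k i * x k) (c i i * z i)`, empty max being `0`. -/
def IsRecML (E : Fin d → Fin d → Prop) (c : Fin d → Fin d → ℝ≥0) (z x : Fin d → ℝ≥0) : Prop :=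
  ∀ i, x i = (Finset.univ.sup fun k => if E k i then c k i * x k else 0) ⊔ c i i * z i

/-- Max-times matrix product `F ⊙ G`. -/
noncomputable def mprod (F G : Fin d → Fin d → ℝ≥0) : Fin d → Fin d → ℝ≥0 :=
  fun i j => Finset.univ.sup fun k => F i k * G k j

/-- Max-times matrix power, `mpow A 0` being the identity matrix. -/
noncomputable def mpow (A : Fin d → Fin d → ℝ≥0) : ℕ → Fin d → Fin d → ℝ≥0
  | 0 => fun i j => if i = j then 1 else 0
  | n + 1 => mprod (mpow A n) A

/-- `p` is a max-weighted path from `j` to `i`. -/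
def MaxWeighted (E : Fin d → Fin d → Prop) (c b : Fin d → Fin d → ℝ≥0)
    (j i : Fin d) (p : List (Fin d)) : Prop :=
  PathFrom E j i p ∧ pathWeight c j p = b j i

/-- The lowest max-weighted ancestors of `i` in `U`: nodes `j ∈ An(i) ∩ U` such that no
max-weighted path from `j` to `i` passes through a node of `U \ {j}`. -/
def AnLow (E : Fin d → Fin d → Prop) (c b : Fin d → Fin d → ℝ≥0)
    (U : Set (Fin d)) (i : Fin d) : Set (Fin d) :=
  {j | (anc E j i ∨ j = i) ∧ j ∈ U ∧
    ∀ p, MaxWeighted E c b j i p → ¬ ∃ u ∈ U \ {j}, u ∈ p}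

/-- The highest max-weighted descendants of `i` in `U`: nodes `l ∈ De(i) ∩ U` such that no
max-weighted path from `i` to `l` passes through a node of `U \ {l}`. -/
def DeHigh (E : Fin d → Fin d → Prop) (c b : Fin d → Fin d → ℝ≥0)
    (U : Set (Fin d)) (i : Fin d) : Set (Fin d) :=
  {l | (anc E i l ∨ l = i) ∧ l ∈ U ∧
    ∀ p, MaxWeighted E c b i l p → ¬ ∃ u ∈ U \ {l}, u ∈ p}

noncomputable def eprod (c : Fin d → Fin d → ℝ≥0) (p : List (Fin d)) : ℝ≥0 :=
  ((p.zip p.tail).map fun q => c q.1 q.2).prod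

variable {E : Fin d → Fin d → Prop} {c : Fin d → Fin d → ℝ≥0}

lemma pathWeight_eq (c : Fin d → Fin d → ℝ≥0) (j : Fin d) (p : List (Fin d)) :
    pathWeight c j p = c j j * eprod c p := rfl

lemma eprod_nil : eprod c ([] : List (Fin d)) = 1 := rfl
lemma eprod_single (a : Fin d) : eprod c [a] = 1 := rfl
lemma eprod_cons_cons (a b' : Fin d) (s : List (Fin d)) :
    eprod c (a :: b' :: s) = c a b' * eprod c (b' :: s) := by
  simp [eprod]

lemma eprod_append_single : ∀ (q : List (Fin d)) (k i : Fin d), q.getLast? = some k →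
    eprod c (q ++ [i]) = eprod c q * c k i
  | [], k, i, h => by simp at h
  | [a], k, i, h => by
      simp at h; subst h
      simp [eprod_cons_cons, eprod_single]
  | a :: b' :: t, k, i, h => by
      have h' : (b' :: t).getLast? = some k := by simpa using h
      have ih := eprod_append_single (b' :: t) k i h'
      simp only [List.cons_append] at ih ⊢
      rw [eprod_cons_cons, eprod_cons_cons, ih, mul_assoc]

lemma eprod_append_tail : ∀ (t : List (Fin d)) (p : List (Fin d)) (k : Fin d),
    p.getLast? = some k → eprod c (p ++ t) = eprod c p * eprod c (k :: t)
  | [], p, k, h => by simp [eprod_single]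
  | m :: t', p, k, h => by
      have h1 : (p ++ [m]).getLast? = some m := by simp
      have ih := eprod_append_tail t' (p ++ [m]) m h1
      have : p ++ m :: t' = (p ++ [m]) ++ t' := by simp
      rw [this, ih, eprod_append_single p k m h, eprod_cons_cons, mul_assoc]

lemma eprod_pos (hce : ∀ a b', E a b' → 0 < c a b') :
    ∀ (p : List (Fin d)), List.Chain' E p → 0 < eprod c p
  | [], _ => by rw [eprod_nil]; exact one_pos
  | [a], _ => by rw [eprod_single]; exact one_pos
  | a :: b' :: t, h => by
      rw [List.Chain', List.isChain_cons_cons] at h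
      rw [eprod_cons_cons]
      exact mul_pos (hce _ _ h.1) (eprod_pos hce (b' :: t) h.2)

lemma pathFrom_single {k i : Fin d} (h : E k i) : PathFrom E k i [k, i] := by
  refine ⟨by simp, rfl, rfl, ?_⟩
  simp [List.Chain', h]

lemma pathFrom_append {j k i : Fin d} {q : List (Fin d)} (hp : PathFrom E j k q) (h : E k i) :
    PathFrom E j i (q ++ [i]) := by
  obtain ⟨hl, hh, hg, hc⟩ := hp
  have hq : q ≠ [] := by rintro rfl; simp at hl
  refine ⟨by simp; omega, ?_, by simp, ?_⟩
  · rw [List.head?_append_of_ne_nil _ hq] -- guess name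
    exact hh
  · rw [List.Chain', List.isChain_append]
    refine ⟨hc, List.isChain_singleton i, ?_⟩
    intro x hx y hy
    simp at hy; subst hy
    rw [hg] at hx; simp at hx; subst hx; exact h

lemma pathWeight_append {j k i : Fin d} {q : List (Fin d)} (hg : q.getLast? = some k) :
    pathWeight c j (q ++ [i]) = pathWeight c j q * c k i := by
  rw [pathWeight_eq, pathWeight_eq, eprod_append_single q k i hg, mul_assoc]

lemma pathFrom_concat {j k i : Fin d} {p q : List (Fin d)}
    (hp : PathFrom E j k p) (hq : PathFrom E k i q) :
    PathFrom E j i (p ++ q.tail) ∧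
      pathWeight c j (p ++ q.tail) * c k k = pathWeight c j p * pathWeight c k q := by
  obtain ⟨hl, hh, hg, hc⟩ := hp
  obtain ⟨hl', hh', hg', hc'⟩ := hq
  have hqne : q ≠ [] := by rintro rfl; simp at hl'
  obtain ⟨t, rfl⟩ : ∃ t, q = k :: t := by
    cases q with
    | nil => simp at hl'
    | cons a t => simp at hh'; subst hh'; exact ⟨t, rfl⟩
  have htne : t ≠ [] := by rintro rfl; simp at hl'
  have hpne : p ≠ [] := by rintro rfl; simp at hl
  constructor
  · refine ⟨?_, ?_, ?_, ?_⟩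
    · have : 1 ≤ t.length := List.length_pos_iff.2 htne
      simp; omega
    · rw [List.head?_append_of_ne_nil _ hpne]; exact hh
    · rw [List.tail_cons, List.getLast?_append_of_ne_nil _ htne]
      cases t with
      | nil => exact absurd rfl htne
      | cons a t' => simpa using hg'
    · rw [List.Chain', List.isChain_append]
      rw [List.Chain', List.isChain_cons] at hc'
      refine ⟨hc, hc'.2, ?_⟩
      intro x hx y hy
      rw [hg] at hx; simp at hx; subst hx
      exact hc'.1 y hy
  · have := eprod_append_tail (c := c) t p k hg
    rw [pathWeight_eq, pathWeight_eq, pathWeight_eq, List.tail_cons, this]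
    ring

lemma anc_of_edge {k i : Fin d} (h : E k i) : anc E k i := ⟨_, pathFrom_single h⟩

lemma anc_trans {j k i : Fin d} (h1 : anc E j k) (h2 : anc E k i) : anc E j i := by
  obtain ⟨p, hp⟩ := h1; obtain ⟨q, hq⟩ := h2
  exact ⟨_, (pathFrom_concat (c := fun _ _ => 1) hp hq).1⟩

lemma anc_append {j k i : Fin d} (h1 : anc E j k) (h2 : E k i) : anc E j i := by
  obtain ⟨p, hp⟩ := h1
  exact ⟨_, pathFrom_append hp h2⟩

lemma wf_anc (hE : Acyclic E) : WellFounded (anc E) := by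
  have h1 : IsTrans (Fin d) (anc E) := ⟨fun a b cc h1 h2 => anc_trans h1 h2⟩
  have h2 : IsIrrefl (Fin d) (anc E) := ⟨fun a h => hE a h⟩
  exact Finite.wellFounded_of_trans_of_irrefl _

lemma wf_anc_flip (hE : Acyclic E) : WellFounded (fun a b => anc E b a) := by
  have h1 : IsTrans (Fin d) (fun a b => anc E b a) := ⟨fun a b cc h1 h2 => anc_trans h2 h1⟩
  have h2 : IsIrrefl (Fin d) (fun a b => anc E b a) := ⟨fun a h => hE a h⟩
  exact Finite.wellFounded_of_trans_of_irrefl _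



section BMat
variable {b : Fin d → Fin d → ℝ≥0}

lemma b_diag_pos (hcd : ∀ i, 0 < c i i) (hb : IsMLMatrix E c b) (i : Fin d) : 0 < b i i := by
  rw [hb.1]; exact hcd i

lemma pathWeight_pos (hcd : ∀ i, 0 < c i i) (hce : ∀ k i, E k i → 0 < c k i)
    {j : Fin d} {p : List (Fin d)} (hc : List.Chain' E p) : 0 < pathWeight c j p :=
  mul_pos (hcd j) (eprod_pos hce p hc)

lemma b_pos_of_anc (hcd : ∀ i, 0 < c i i) (hce : ∀ k i, E k i → 0 < c k i)
    (hb : IsMLMatrix E c b) {j i : Fin d} (h : anc E j i) : 0 < b j i := by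
  obtain ⟨p, hp, hw⟩ := hb.2.2.2 j i h
  exact hw ▸ pathWeight_pos hcd hce hp.2.2.2

lemma anc_of_b_pos (hb : IsMLMatrix E c b) {j i : Fin d} (h : b j i ≠ 0) (hne : j ≠ i) :
    anc E j i := by
  by_contra hn
  exact h (hb.2.1 j i hne hn)

lemma edge_mul_le (hb : IsMLMatrix E c b) {k i : Fin d} (h : E k i) : c k k * c k i ≤ b k i := by
  have := hb.2.2.1 k i [k, i] (pathFrom_single h)
  simpa [pathWeight, eprod] using this

lemma append_ineq (hb : IsMLMatrix E c b) {k i : Fin d}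
    (h2 : E k i) (j' : Fin d) : b j' k * c k i ≤ b j' i := by
  by_cases hjk : j' = k
  · subst hjk
    rw [hb.1]
    exact edge_mul_le hb h2
  · by_cases hz : b j' k = 0
    · simp [hz]
    · obtain ⟨p, hp, hw⟩ := hb.2.2.2 j' k (anc_of_b_pos hb hz hjk)
      have hpa := pathFrom_append hp h2
      have hwt : pathWeight c j' (p ++ [i]) = pathWeight c j' p * c k i :=
        pathWeight_append hp.2.2.1
      have := hb.2.2.1 j' i (p ++ [i]) hpa
      rw [hwt, hw] at this
      exact this

lemma concat_ineq (hcd : ∀ i, 0 < c i i) (hb : IsMLMatrix E c b) {j k i : Fin d}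
    (h1 : anc E j k ∨ j = k) (h2 : anc E k i) : b j k * b k i ≤ b j i * b k k := by
  rcases h1 with h1 | rfl
  · obtain ⟨p, hp, hwp⟩ := hb.2.2.2 j k h1
    obtain ⟨q, hq, hwq⟩ := hb.2.2.2 k i h2
    obtain ⟨hpq, hw⟩ := pathFrom_concat (c := c) hp hq
    have hle := hb.2.2.1 j i _ hpq
    calc b j k * b k i = pathWeight c j p * pathWeight c k q := by rw [hwp, hwq]
      _ = pathWeight c j (p ++ q.tail) * c k k := hw.symm
      _ ≤ b j i * c k k := mul_le_mul_left hle _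
      _ = b j i * b k k := by rw [hb.1]
  · rw [mul_comm]

lemma concat_ineq' (hcd : ∀ i, 0 < c i i) (hb : IsMLMatrix E c b) {k i : Fin d}
    (h2 : anc E k i) (j' : Fin d) : b j' k * b k i ≤ b j' i * b k k := by
  by_cases hjk : j' = k
  · exact concat_ineq hcd hb (Or.inr hjk) h2
  · by_cases hz : b j' k = 0
    · simp [hz]
    · exact concat_ineq hcd hb (Or.inl (anc_of_b_pos hb hz hjk)) h2

lemma decomp (hcd : ∀ i, 0 < c i i) (hb : IsMLMatrix E c b) {j i : Fin d} (h : anc E j i) :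
    ∃ k, E k i ∧ (anc E j k ∨ j = k) ∧ b j i ≤ b j k * c k i ∧
      b j i * b k k = b j k * b k i := by
  obtain ⟨p, hp, hw⟩ := hb.2.2.2 j i h
  obtain ⟨hl, hh, hg, hc⟩ := hp
  have hpne : p ≠ [] := by rintro rfl; simp at hl
  have hple : p = p.dropLast ++ [i] := by
    have h1 := List.dropLast_append_getLast hpne
    have h2 : p.getLast hpne = i := by
      have := List.getLast?_eq_getLast hpne
      rw [hg] at this; exact (Option.some_injective _ this.symm)
    rw [h2] at h1; exact h1.symm
  have hqne : p.dropLast ≠ [] := by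
    intro hq
    rw [hq] at hple; rw [hple] at hl; simp at hl
  obtain ⟨q, hqne, hpeq, hqh, hchq, hki, k, hqg⟩ :
      ∃ q : List (Fin d), q ≠ [] ∧ p = q ++ [i] ∧ q.head? = some j ∧ List.Chain' E q ∧
        (∀ k', q.getLast? = some k' → E k' i) ∧ ∃ k, q.getLast? = some k := by
    refine ⟨p.dropLast, hqne, hple, ?_, ?_, ?_, ?_⟩
    · rw [hple, List.head?_append_of_ne_nil _ hqne] at hh; exact hh
    · rw [hple, List.Chain', List.isChain_append] at hc; exact hc.1
    · intro k' hk'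
      rw [hple, List.Chain', List.isChain_append] at hc
      exact hc.2.2 k' (by rw [hk']; rfl) i rfl
    · exact ⟨_, List.getLast?_eq_getLast hqne⟩
  have hEki : E k i := hki k hqg
  have hwq : pathWeight c j p = pathWeight c j q * c k i := by
    conv_lhs => rw [hpeq]
    exact pathWeight_append hqg
  have key : (anc E j k ∨ j = k) ∧ pathWeight c j q ≤ b j k := by
    cases q with
    | nil => exact absurd rfl hqne
    | cons a t =>
      cases t with
      | nil =>
        simp only [List.head?_cons, Option.some.injEq] at hqh
        subst hqh
        simp only [List.getLast?_singleton, Option.some.injEq] at hqg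
        subst hqg
        refine ⟨Or.inr rfl, ?_⟩
        rw [pathWeight_eq, eprod_single, mul_one, hb.1]
      | cons a' t' =>
        have hpf : PathFrom E j k (a :: a' :: t') := ⟨by simp, hqh, hqg, hchq⟩
        exact ⟨Or.inl ⟨_, hpf⟩, hb.2.2.1 j k _ hpf⟩
  have hle1 : b j i ≤ b j k * c k i := by
    rw [← hw, hwq]; exact mul_le_mul_left key.2 _
  refine ⟨k, hEki, key.1, hle1, ?_⟩
  apply le_antisymm
  · calc b j i * b k k ≤ (b j k * c k i) * b k k := mul_le_mul_left hle1 _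
      _ = b j k * (c k k * c k i) := by rw [hb.1]; ring
      _ ≤ b j k * b k i := mul_le_mul_right (edge_mul_le hb hEki) _
  · exact concat_ineq hcd hb key.1 (anc_of_edge hEki)

lemma fund (hd : 1 ≤ d) (hE : Acyclic E) (hcd : ∀ i, 0 < c i i)
    (hce : ∀ k i, E k i → 0 < c k i) (hb : IsMLMatrix E c b)
    (z x : Fin d → ℝ≥0) (hx : IsRecML E c z x) (i : Fin d) :
    x i = Finset.univ.sup fun j => b j i * z j := by
  induction i using (wf_anc hE).induction with
  | _ i IH =>
  rw [hx i]
  apply le_antisymm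
  · apply sup_le
    · apply Finset.sup_le
      intro k _
      split_ifs with hk
      · rw [IH k (anc_of_edge hk), NNReal.mul_finset_sup]
        apply Finset.sup_le
        intro j _
        calc c k i * (b j k * z j) = (b j k * c k i) * z j := by ring
          _ ≤ b j i * z j := mul_le_mul_left (append_ineq hb hk j) _
          _ ≤ _ := Finset.le_sup (f := fun j => b j i * z j) (Finset.mem_univ j)
      · exact zero_le
    · calc c i i * z i = b i i * z i := by rw [hb.1]
        _ ≤ _ := Finset.le_sup (f := fun j => b j i * z j) (Finset.mem_univ i)
  · apply Finset.sup_le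
    intro j _
    by_cases hji : j = i
    · subst hji
      rw [hb.1]
      exact le_sup_right
    · by_cases hbj : b j i = 0
      · simp [hbj]
      · have hanc := anc_of_b_pos hb hbj hji
        obtain ⟨k, hkE, hor, hle, _⟩ := decomp hcd hb hanc
        have h1 : b j k * z j ≤ x k := by
          rw [IH k (anc_of_edge hkE)]
          exact Finset.le_sup (f := fun j' => b j' k * z j') (Finset.mem_univ j)
        calc b j i * z j ≤ (b j k * c k i) * z j := mul_le_mul_left hle _
          _ = c k i * (b j k * z j) := by ring
          _ ≤ c k i * x k := mul_le_mul_right h1 _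
          _ ≤ Finset.univ.sup fun k' => if E k' i then c k' i * x k' else 0 := by
              refine le_trans ?_ (Finset.le_sup (Finset.mem_univ k))
              rw [if_pos hkE]
          _ ≤ _ := le_sup_left

lemma key2 (hd : 1 ≤ d) (hE : Acyclic E) (hcd : ∀ i, 0 < c i i)
    (hce : ∀ k i, E k i → 0 < c k i) (hb : IsMLMatrix E c b)
    {j i : Fin d} (hanc : anc E j i) :
    ∃ k, (E k i ∧ (Finset.univ.sup fun l =>
        if anc E k l ∧ E l i then b k l * b l i / b l l else 0) < b k i) ∧
      (anc E j k ∨ j = k) ∧ b j i * b k k = b j k * b k i := by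
  obtain ⟨k₀, hk₀E, hor₀, _, heq₀⟩ := decomp hcd hb hanc
  have main : ∀ k₀, E k₀ i → (anc E j k₀ ∨ j = k₀) → b j i * b k₀ k₀ = b j k₀ * b k₀ i →
      ∃ k, (E k i ∧ (Finset.univ.sup fun l =>
          if anc E k l ∧ E l i then b k l * b l i / b l l else 0) < b k i) ∧
        (anc E j k ∨ j = k) ∧ b j i * b k k = b j k * b k i := by
    intro k₀
    induction k₀ using (wf_anc_flip hE).induction with
    | _ k₀ IH =>
    intro hk hor heq
    by_cases hB : (Finset.univ.sup fun l =>
        if anc E k₀ l ∧ E l i then b k₀ l * b l i / b l l else 0) < b k₀ i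
    · exact ⟨k₀, ⟨hk, hB⟩, hor, heq⟩
    · push_neg at hB
      obtain ⟨l, _, hsup⟩ := Finset.exists_mem_eq_sup Finset.univ
        ⟨⟨0, hd⟩, Finset.mem_univ _⟩
        (fun l => if anc E k₀ l ∧ E l i then b k₀ l * b l i / b l l else 0)
      rw [hsup] at hB
      have hpos : 0 < b k₀ i := b_pos_of_anc hcd hce hb (anc_of_edge hk)
      have hcond : anc E k₀ l ∧ E l i := by
        by_contra hcon
        rw [if_neg hcon] at hB
        exact absurd (lt_of_lt_of_le hpos hB) (lt_irrefl 0)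
      rw [if_pos hcond] at hB
      obtain ⟨hal, hel⟩ := hcond
      have hbll : b l l ≠ 0 := (b_diag_pos hcd hb l).ne'
      have hB' : b k₀ i * b l l ≤ b k₀ l * b l i := (le_div_iff₀ (b_diag_pos hcd hb l)).mp hB
      have hrev : b k₀ l * b l i ≤ b k₀ i * b l l :=
        concat_ineq hcd hb (Or.inl hal) (anc_of_edge hel)
      have heq2 : b k₀ i * b l l = b k₀ l * b l i := le_antisymm hB' hrev
      have hjl : anc E j l := by
        rcases hor with h1 | rfl
        · exact anc_trans h1 hal
        · exact hal
      have h1 : (b j i * b l l) * b k₀ k₀ = (b j k₀ * b k₀ l) * b l i := by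
        calc (b j i * b l l) * b k₀ k₀ = (b j i * b k₀ k₀) * b l l := by ring
          _ = (b j k₀ * b k₀ i) * b l l := by rw [heq]
          _ = b j k₀ * (b k₀ i * b l l) := by ring
          _ = b j k₀ * (b k₀ l * b l i) := by rw [heq2]
          _ = (b j k₀ * b k₀ l) * b l i := by ring
      have h2 : b j k₀ * b k₀ l ≤ b j l * b k₀ k₀ := concat_ineq hcd hb hor hal
      have h3 : b j l * b l i ≤ b j i * b l l :=
        concat_ineq hcd hb (Or.inl hjl) (anc_of_edge hel)
      have h4 : (b j i * b l l) * b k₀ k₀ ≤ (b j l * b l i) * b k₀ k₀ := by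
        rw [h1]
        calc (b j k₀ * b k₀ l) * b l i ≤ (b j l * b k₀ k₀) * b l i :=
              mul_le_mul_left h2 _
          _ = (b j l * b l i) * b k₀ k₀ := by ring
      have h5 : (b j l * b l i) * b k₀ k₀ ≤ (b j i * b l l) * b k₀ k₀ :=
        mul_le_mul_left h3 _
      have h6 : b j i * b l l = b j l * b l i :=
        mul_right_cancel₀ (b_diag_pos hcd hb k₀).ne' (le_antisymm h4 h5)
      exact IH l hal hel (Or.inl hjl) h6
  exact main k₀ hk₀E hor₀ heq₀

lemma part1 (hd : 1 ≤ d) (hE : Acyclic E) (hcd : ∀ i, 0 < c i i)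
    (hce : ∀ k i, E k i → 0 < c k i) (hb : IsMLMatrix E c b)
    (z x : Fin d → ℝ≥0) (hx : IsRecML E c z x) (i : Fin d) :
    x i = (Finset.univ.sup fun k => if (E k i ∧ (Finset.univ.sup fun l =>
        if anc E k l ∧ E l i then b k l * b l i / b l l else 0) < b k i)
        then (b k i / b k k) * x k else 0) ⊔ b i i * z i := by
  have hX : ∀ m, x m = Finset.univ.sup fun j => b j m * z j := fund hd hE hcd hce hb z x hx
  rw [hX i]
  apply le_antisymm
  · apply Finset.sup_le
    intro j _
    by_cases hji : j = i
    · subst hji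
      exact le_sup_right
    · by_cases hbj : b j i = 0
      · simp [hbj]
      · have hanc := anc_of_b_pos hb hbj hji
        obtain ⟨k, hkB, hor, heq⟩ := key2 hd hE hcd hce hb hanc
        have hbkk : b k k ≠ 0 := (b_diag_pos hcd hb k).ne'
        have hdiv : b j i = (b k i / b k k) * b j k := by
          rw [div_mul_eq_mul_div]
          refine (eq_div_iff hbkk).mpr ?_
          rw [heq]; ring
        have h1 : b j k * z j ≤ x k := by
          rw [hX k]
          exact Finset.le_sup (f := fun j' => b j' k * z j') (Finset.mem_univ j)
        calc b j i * z j = (b k i / b k k) * (b j k * z j) := by rw [hdiv]; ring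
          _ ≤ (b k i / b k k) * x k := mul_le_mul_right h1 _
          _ ≤ (Finset.univ.sup fun k' => if (E k' i ∧ (Finset.univ.sup fun l =>
                if anc E k' l ∧ E l i then b k' l * b l i / b l l else 0) < b k' i)
                then (b k' i / b k' k') * x k' else 0) := by
              refine le_trans ?_ (Finset.le_sup (Finset.mem_univ k))
              rw [if_pos hkB]
          _ ≤ _ := le_sup_left
  · apply sup_le
    · apply Finset.sup_le
      intro k _
      split_ifs with hk
      · rw [hX k, NNReal.mul_finset_sup]
        apply Finset.sup_le
        intro j _
        have hbkk : b k k ≠ 0 := (b_diag_pos hcd hb k).ne'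
        have hcc : b j k * b k i ≤ b j i * b k k :=
          concat_ineq' hcd hb (anc_of_edge hk.1) j
        have h2 : (b k i / b k k) * b j k ≤ b j i := by
          rw [div_mul_eq_mul_div, div_le_iff₀ (b_diag_pos hcd hb k)]
          calc b k i * b j k = b j k * b k i := by ring
            _ ≤ b j i * b k k := hcc
        calc (b k i / b k k) * (b j k * z j) = ((b k i / b k k) * b j k) * z j := by ring
          _ ≤ b j i * z j := mul_le_mul_left h2 _
          _ ≤ _ := Finset.le_sup (f := fun j' => b j' i * z j') (Finset.mem_univ j)
      · exact zero_le
    · exact Finset.le_sup (f := fun j => b j i * z j) (Finset.mem_univ i)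

section Part2
variable {E' : Fin d → Fin d → Prop} {c' : Fin d → Fin d → ℝ≥0}

lemma sup_ind (g : Fin d → ℝ≥0) (t : Fin d) :
    (Finset.univ.sup fun j => g j * if j = t then (1:ℝ≥0) else 0) = g t := by
  apply le_antisymm
  · apply Finset.sup_le
    intro j _
    split_ifs with h
    · subst h; simp
    · simp
  · refine le_trans ?_ (Finset.le_sup
      (f := fun j => g j * if j = t then (1:ℝ≥0) else 0) (Finset.mem_univ t))
    simp

lemma rep_eq (hrep : ∀ z : Fin d → ℝ≥0,
      IsRecML E' c' z fun i => Finset.univ.sup fun j => b j i * z j)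
    (t i : Fin d) :
    b t i = (Finset.univ.sup fun k => if E' k i then c' k i * b t k else 0) ⊔
      c' i i * (if i = t then 1 else 0) := by
  have h := hrep (fun j => if j = t then 1 else 0) i
  simp only [sup_ind] at h
  exact h

lemma claimA (hE' : Acyclic E')
    (hrep : ∀ z : Fin d → ℝ≥0,
      IsRecML E' c' z fun i => Finset.univ.sup fun j => b j i * z j)
    (t : Fin d) : ∀ jn, b t jn ≠ 0 → jn = t ∨ anc E' t jn := by
  intro jn
  induction jn using (wf_anc hE').induction with
  | _ jn IH =>
  intro hjn
  by_cases hjt : jn = t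
  · exact Or.inl hjt
  · right
    have h := rep_eq hrep t jn
    rw [if_neg hjt, mul_zero, sup_eq_left.mpr (zero_le)] at h
    obtain ⟨k, _, hk⟩ := Finset.exists_mem_eq_sup Finset.univ
      ⟨t, Finset.mem_univ t⟩ (fun k => if E' k jn then c' k jn * b t k else 0)
    rw [hk] at h
    by_cases hE'k : E' k jn
    · rw [if_pos hE'k] at h
      have hbtk : b t k ≠ 0 := by
        intro h0; rw [h0, mul_zero] at h; exact hjn h
      rcases IH k (anc_of_edge hE'k) hbtk with rfl | ha
      · exact anc_of_edge hE'k
      · exact anc_append ha hE'k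
    · rw [if_neg hE'k] at h; exact absurd h hjn

lemma part2_diag (hcd : ∀ i, 0 < c i i) (hb : IsMLMatrix E c b) (hE' : Acyclic E')
    (hrep : ∀ z : Fin d → ℝ≥0,
      IsRecML E' c' z fun i => Finset.univ.sup fun j => b j i * z j)
    (i : Fin d) : c' i i = b i i := by
  have h := rep_eq hrep i i
  rw [if_pos rfl, mul_one] at h
  rcases le_total (Finset.univ.sup fun k => if E' k i then c' k i * b i k else 0)
      (c' i i) with hle | hle
  · rw [sup_eq_right.mpr hle] at h; exact h.symm
  · exfalso
    rw [sup_eq_left.mpr hle] at h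
    have hbpos : b i i ≠ 0 := (b_diag_pos hcd hb i).ne'
    obtain ⟨k, _, hk⟩ := Finset.exists_mem_eq_sup Finset.univ
      ⟨i, Finset.mem_univ i⟩ (fun k => if E' k i then c' k i * b i k else 0)
    rw [hk] at h
    by_cases hE'k : E' k i
    · rw [if_pos hE'k] at h
      have hbik : b i k ≠ 0 := by
        intro h0; rw [h0, mul_zero] at h; exact hbpos h
      rcases claimA hE' hrep i k hbik with rfl | ha
      · exact hE' k ⟨_, pathFrom_single hE'k⟩
      · exact hE' i (anc_append ha hE'k)
    · rw [if_neg hE'k] at h; exact hbpos h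

lemma part2_edge (hE : Acyclic E) (hcd : ∀ i, 0 < c i i)
    (hce : ∀ k i, E k i → 0 < c k i) (hb : IsMLMatrix E c b)
    (hE' : Acyclic E') (hce' : ∀ k i, E' k i → 0 < c' k i)
    (hrep : ∀ z : Fin d → ℝ≥0,
      IsRecML E' c' z fun i => Finset.univ.sup fun j => b j i * z j)
    (k i : Fin d) (hkE : E k i)
    (hlt : (Finset.univ.sup fun l =>
        if anc E k l ∧ E l i then b k l * b l i / b l l else 0) < b k i) :
    E' k i ∧ c' k i = b k i / b k k := by
  have hki0 : b k i ≠ 0 := (lt_of_le_of_lt (zero_le) hlt).ne'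
  have hkne : k ≠ i := by rintro rfl; exact hE k ⟨_, pathFrom_single hkE⟩
  have h := rep_eq hrep k i
  rw [if_neg (fun hik => hkne hik.symm), mul_zero, sup_eq_left.mpr (zero_le)] at h
  obtain ⟨l, _, hl⟩ := Finset.exists_mem_eq_sup Finset.univ
    ⟨k, Finset.mem_univ k⟩ (fun l => if E' l i then c' l i * b k l else 0)
  rw [hl] at h
  have hE'l : E' l i := by
    by_contra hc'
    rw [if_neg hc'] at h; exact hki0 h
  rw [if_pos hE'l] at h
  have hbkl : b k l ≠ 0 := by
    intro h0; rw [h0, mul_zero] at h; exact hki0 h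
  have hli : l ≠ i := by rintro rfl; exact hE' l ⟨_, pathFrom_single hE'l⟩
  have hbll : (0:ℝ≥0) < b l l := b_diag_pos hcd hb l
  -- c' l i * b l l ≤ b l i
  have hcli : c' l i * b l l ≤ b l i := by
    have h2 := rep_eq hrep l i
    rw [if_neg (fun hil => hli hil.symm), mul_zero, sup_eq_left.mpr (zero_le)] at h2
    rw [h2]
    refine le_trans ?_ (Finset.le_sup (Finset.mem_univ l))
    rw [if_pos hE'l]
  by_cases hlk : l = k
  · subst hlk
    refine ⟨hE'l, ?_⟩
    exact (eq_div_iff (b_diag_pos hcd hb l).ne').mpr h.symm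
  · exfalso
    have hancKL : anc E k l := anc_of_b_pos hb hbkl (fun hkl => hlk hkl.symm)
    have hbli0 : b l i ≠ 0 := by
      intro h0
      rw [h0] at hcli
      have := lt_of_lt_of_le (mul_pos (hce' l i hE'l) hbll) hcli
      exact absurd this (lt_irrefl 0)
    have hancLI : anc E l i := anc_of_b_pos hb hbli0 hli
    have heq1 : b k i * b l l = b k l * b l i := by
      apply le_antisymm
      · calc b k i * b l l = (c' l i * b k l) * b l l := by rw [h]
          _ = b k l * (c' l i * b l l) := by ring
          _ ≤ b k l * b l i := mul_le_mul_right hcli _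
      · exact concat_ineq hcd hb (Or.inl hancKL) hancLI
    obtain ⟨m, hmE, horlm, _, heq2⟩ := decomp hcd hb hancLI
    have hancKM : anc E k m := by
      rcases horlm with h1 | rfl
      · exact anc_trans hancKL h1
      · exact hancKL
    have hfin : b k i * b m m ≤ b k m * b m i := by
      rcases horlm with hlm | rfl
      · have h2' : b k l * b l m ≤ b k m * b l l := concat_ineq hcd hb (Or.inl hancKL) hlm
        have hchain : (b k i * b m m) * b l l ≤ (b k m * b m i) * b l l := by
          calc (b k i * b m m) * b l l = (b k i * b l l) * b m m := by ring
            _ = (b k l * b l i) * b m m := by rw [heq1]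
            _ = b k l * (b l i * b m m) := by ring
            _ = b k l * (b l m * b m i) := by rw [heq2]
            _ = (b k l * b l m) * b m i := by ring
            _ ≤ (b k m * b l l) * b m i := mul_le_mul_left h2' _
            _ = (b k m * b m i) * b l l := by ring
        exact le_of_mul_le_mul_right hchain hbll
      · exact heq1.le
    have : b k i ≤ (Finset.univ.sup fun l' =>
        if anc E k l' ∧ E l' i then b k l' * b l' i / b l' l' else 0) := by
      refine le_trans ?_ (Finset.le_sup (Finset.mem_univ m))
      rw [if_pos ⟨hancKM, hmE⟩]
      exact (le_div_iff₀ (b_diag_pos hcd hb m)).mpr hfin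
    exact absurd (lt_of_le_of_lt this hlt) (lt_irrefl _)

end Part2
end BMat



/-- (1) For every `z`, the recursive max-linear values `x` on `𝒟` satisfy
`x i = max (max_{k ∈ pa^B(i)} (b k i / b k k) * x k) (b i i * z i)` where `pa^B(i)` are the
parents of `i` in the minimum ML DAG `𝒟^B`; thus the model is a recursive ML model on `𝒟^B`
with weights `c k i = b k i / b k k` and `c i i = b i i`.
(2) For any DAG `𝒟' = (V, E')` with positive weights `c'` whose recursive max-linear values
equal `max_j b j i * z j` for every `z`, one has `E^B ⊆ E'`, `c' i i = b i i`, and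
`c' k i = b k i / b k k` for `(k,i) ∈ E^B`; hence `𝒟^B` has the minimum number of edges. -/
theorem stmt11 {d : ℕ} (hd : 1 ≤ d) (E : Fin d → Fin d → Prop) (hE : Acyclic E)
    (c : Fin d → Fin d → ℝ≥0) (hcd : ∀ i, 0 < c i i) (hce : ∀ k i, E k i → 0 < c k i)
    (b : Fin d → Fin d → ℝ≥0) (hb : IsMLMatrix E c b) :
    let edgeB : Fin d → Fin d → Prop := fun k i => E k i ∧
      (Finset.univ.sup fun l =>
        if anc E k l ∧ E l i then b k l * b l i / b l l else 0) < b k i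
    (∀ z x : Fin d → ℝ≥0, IsRecML E c z x → ∀ i, x i =
      (Finset.univ.sup fun k => if edgeB k i then (b k i / b k k) * x k else 0) ⊔
        b i i * z i) ∧
    (∀ (E' : Fin d → Fin d → Prop) (c' : Fin d → Fin d → ℝ≥0), Acyclic E' →
      (∀ k i, E' k i → 0 < c' k i) → (∀ i, 0 < c' i i) →
      (∀ z : Fin d → ℝ≥0,
        IsRecML E' c' z fun i => Finset.univ.sup fun j => b j i * z j) →
      (∀ k i, edgeB k i → E' k i) ∧ (∀ i, c' i i = b i i) ∧
        (∀ k i, edgeB k i → c' k i = b k i / b k k)) := by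
  intro edgeB
  refine ⟨?_, ?_⟩
  · intro z x hx i
    exact part1 hd hE hcd hce hb z x hx i
  · intro E' c' hE' hce' hcd' hrep
    refine ⟨fun k i hki => (part2_edge hE hcd hce hb hE' hce' hrep k i hki.1 hki.2).1,
      part2_diag hcd hb hE' hrep,
      fun k i hki => (part2_edge hE hcd hce hb hE' hce' hrep k i hki.1 hki.2).2⟩
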